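/- Let n = 2^k, let H_n be the normalized Walsh–Hadamard matrix of size n, let U ∈ ℝ^{n×d} have orthonormal columns, and let D̄ ∈ ℝ^{d×d} be a diagonal positive semidefinite matrix with ‖D̄‖₂ ≤ 1; set d_e = ‖D̄‖_F². Let ε ∈ {±1}^n be a vector of n independent Rademacher (uniform ±1) random variables, and let e_j denote the j-th standard basis vector of ℝ^n. Then for any δ ∈ (0,1), P( max_{1≤j≤n} ‖e_jᵀ H_n diag(ε) U D̄‖₂ ≥ √(d_e/n) + √(8 log(n/δ)/n) ) ≤ δ. -/

import Mathlib

open Matrix MeasureTheory ProbabilityTheory Real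
open scoped Classical ENNReal NNReal

noncomputable section

/-- The normalized Walsh–Hadamard matrix of size `n = 2^k`:
`(H_n)_{ij} = n^{-1/2}·(-1)^{Σ_l i_l j_l}` where `i_l, j_l` are the binary digits. -/
def walsh (k : ℕ) : Matrix (Fin (2 ^ k)) (Fin (2 ^ k)) ℝ :=
  Matrix.of fun i j =>
    (Real.sqrt (2 ^ k))⁻¹ *
      (-1 : ℝ) ^ (∑ l ∈ Finset.range k, (Nat.testBit i.val l && Nat.testBit j.val l).toNat)

namespace Stmt12Aux

def phi (x : ℝ) : ℝ := (Real.sqrt (2 * π))⁻¹ * Real.exp (-x ^ 2 / 2)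

lemma phi_nonneg (x : ℝ) : 0 ≤ phi x :=
  mul_nonneg (inv_nonneg.2 (Real.sqrt_nonneg _)) (Real.exp_nonneg _)

lemma sqrt_two_pi_pos : 0 < Real.sqrt (2 * π) :=
  Real.sqrt_pos.2 (by positivity)

lemma phi_exp_lin (b x : ℝ) :
    phi x * Real.exp (b * x)
      = ((Real.sqrt (2 * π))⁻¹ * Real.exp (b ^ 2 / 2)) * Real.exp (-(2⁻¹) * (x - b) ^ 2) := by
  unfold phi
  rw [mul_assoc, ← Real.exp_add, mul_assoc, ← Real.exp_add]
  congr 1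
  ring

lemma integrable_phi_exp_lin (b : ℝ) :
    Integrable (fun x => phi x * Real.exp (b * x)) := by
  have h := ((integrable_exp_neg_mul_sq (show (0:ℝ) < 2⁻¹ by norm_num)).comp_sub_right
    b).const_mul ((Real.sqrt (2 * π))⁻¹ * Real.exp (b ^ 2 / 2))
  refine h.congr (Filter.Eventually.of_forall fun x => ?_)
  simp only
  rw [← phi_exp_lin]

lemma integral_phi_exp_lin (b : ℝ) :
    ∫ x, phi x * Real.exp (b * x) = Real.exp (b ^ 2 / 2) := by
  simp_rw [phi_exp_lin b]
  rw [integral_const_mul]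
  rw [integral_sub_right_eq_self (fun x => Real.exp (-(2⁻¹) * x ^ 2)) b]
  rw [integral_gaussian]
  rw [show π / 2⁻¹ = 2 * π by ring]
  rw [mul_comm ((Real.sqrt (2 * π))⁻¹) _, mul_assoc, inv_mul_cancel₀ sqrt_two_pi_pos.ne']
  ring

lemma phi_exp_sq (a x : ℝ) :
    phi x * Real.exp (a * x ^ 2)
      = (Real.sqrt (2 * π))⁻¹ * Real.exp (-(2⁻¹ - a) * x ^ 2) := by
  unfold phi
  rw [mul_assoc, ← Real.exp_add]
  congr 1
  ring

lemma integrable_phi_exp_sq {a : ℝ} (ha : a < 2⁻¹) :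
    Integrable (fun x => phi x * Real.exp (a * x ^ 2)) := by
  have h := (integrable_exp_neg_mul_sq (show (0:ℝ) < 2⁻¹ - a by linarith)).const_mul
    ((Real.sqrt (2 * π))⁻¹)
  refine h.congr (Filter.Eventually.of_forall fun x => ?_)
  simp only
  rw [← phi_exp_sq]

lemma integral_phi_exp_sq {a : ℝ} (ha : a < 2⁻¹) :
    ∫ x, phi x * Real.exp (a * x ^ 2) = (Real.sqrt (1 - 2 * a))⁻¹ := by
  simp_rw [phi_exp_sq a]
  rw [integral_const_mul, integral_gaussian]
  rw [← Real.sqrt_inv, ← Real.sqrt_inv (1 - 2*a), ← Real.sqrt_mul (by positivity)]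
  congr 1
  have h1 : (2⁻¹ - a : ℝ) ≠ 0 := by intro h; rw [sub_eq_zero] at h; linarith
  have h2 : (1 - 2*a : ℝ) ≠ 0 := by intro h; rw [sub_eq_zero] at h; linarith
  field_simp


lemma two_exp_bound (y : ℝ) : Real.exp (-y) + Real.exp y ≤ 2 * Real.exp (y ^ 2 / 2) := by
  have h := Real.cosh_le_exp_half_sq y
  rw [Real.cosh_eq] at h
  linarith

lemma inv_sqrt_le {q l : ℝ} (hq0 : 0 ≤ q) (hq1 : q ≤ 1) (hl0 : 0 ≤ l) (hl : 2 * l < 1) :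
    (Real.sqrt (1 - 2 * (l * q)))⁻¹ ≤ Real.exp (l * q / (1 - 2 * l)) := by
  set u : ℝ := 2 * (l * q) with hu
  have hu0 : 0 ≤ u := by positivity
  have hul : u ≤ 2 * l := by nlinarith
  have hu1 : u < 1 := lt_of_le_of_lt hul hl
  have hd : (0:ℝ) < 1 - 2 * l := by linarith
  set z : ℝ := l * q / (1 - 2 * l) with hz
  have hz0 : 0 ≤ z := div_nonneg (by positivity) hd.le
  -- key : exp (-(2*z)) ≤ 1 - u
  have hkey : Real.exp (-(2 * z)) ≤ 1 - u := by
    have h1 : Real.exp (-(2*z)) ≤ (1 + 2*z)⁻¹ := by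
      rw [Real.exp_neg]
      refine inv_anti₀ (by linarith) ?_
      have := Real.add_one_le_exp (2*z)
      linarith
    refine h1.trans ?_
    rw [inv_le_iff_one_le_mul₀ (by linarith)]
    have hzu : (2 * z) * (1 - 2 * l) = u := by
      rw [hz, hu, mul_assoc, div_mul_cancel₀ _ hd.ne']
      try ring
    nlinarith [mul_nonneg hz0 (sub_nonneg.2 hul)]
  have hsq : Real.sqrt (Real.exp (-(2 * z))) = Real.exp (-z) := by
    rw [show Real.exp (-(2*z)) = (Real.exp (-z))^2 by rw [sq, ← Real.exp_add]; ring_nf,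
      Real.sqrt_sq (Real.exp_nonneg _)]
  have h2 : Real.exp (-z) ≤ Real.sqrt (1 - u) := by
    rw [← hsq]
    exact Real.sqrt_le_sqrt hkey
  have hspos : 0 < Real.sqrt (1 - u) := Real.sqrt_pos.2 (by linarith)
  rw [show (1 - 2*(l*q)) = 1 - u from rfl]
  calc (Real.sqrt (1 - u))⁻¹ ≤ (Real.exp (-z))⁻¹ :=
        inv_anti₀ (Real.exp_pos _) h2
    _ = Real.exp z := by rw [← Real.exp_neg, neg_neg]

lemma mgf_bound {n d : ℕ} (a : Fin n → Fin d → ℝ) (q : Fin d → ℝ)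
    (hGram : ∀ c c', ∑ i, a i c * a i c' = if c = c' then q c else 0)
    (hq0 : ∀ c, 0 ≤ q c) (hq1 : ∀ c, q c ≤ 1)
    (l : ℝ) (hl0 : 0 ≤ l) (hl : 2 * l < 1) :
    ∑ s ∈ Fintype.piFinset (fun _ : Fin n => ({-1, 1} : Finset ℝ)),
      Real.exp (l * ∑ c, (∑ i, a i c * s i) ^ 2)
      ≤ 2 ^ n * Real.exp (l * (∑ c, q c) / (1 - 2 * l)) := by
  classical
  set S := Fintype.piFinset (fun _ : Fin n => ({-1, 1} : Finset ℝ)) with hS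
  set r : ℝ := Real.sqrt (2 * l) with hr
  have hr2 : r ^ 2 = 2 * l := Real.sq_sqrt (by positivity)
  set v : (Fin n → ℝ) → Fin d → ℝ := fun s c => ∑ i, a i c * s i with hv
  -- step 1
  have step1 : ∀ s : Fin n → ℝ, Real.exp (l * ∑ c, v s c ^ 2)
      = ∫ g : Fin d → ℝ, ∏ c, (phi (g c) * Real.exp (r * v s c * g c)) := by
    intro s
    rw [integral_fintype_prod_volume_eq_prod (f := fun c y => phi y * Real.exp (r * v s c * y))]
    have : ∀ c : Fin d, ∫ x : ℝ, phi x * Real.exp (r * v s c * x)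
        = Real.exp (l * v s c ^ 2) := by
      intro c
      rw [integral_phi_exp_lin (r * v s c)]
      congr 1
      rw [mul_pow, hr2]
      ring
    rw [Finset.prod_congr rfl fun c _ => this c, ← Real.exp_sum, ← Finset.mul_sum]
  -- integrability of each summand
  have hint : ∀ s : Fin n → ℝ,
      Integrable (fun g : Fin d → ℝ => ∏ c, (phi (g c) * Real.exp (r * v s c * g c))) :=
    fun s => Integrable.fintype_prod (fun c => integrable_phi_exp_lin (r * v s c))
  -- pointwise bound
  have step3 : ∀ g : Fin d → ℝ,
      ∑ s ∈ S, ∏ c, (phi (g c) * Real.exp (r * v s c * g c))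
        ≤ 2 ^ n * ∏ c, (phi (g c) * Real.exp (l * q c * g c ^ 2)) := by
    intro g
    set θ : Fin n → ℝ := fun i => ∑ c, a i c * g c with hθ
    have hps : ∀ s : Fin n → ℝ, ∏ c, (phi (g c) * Real.exp (r * v s c * g c))
        = (∏ c, phi (g c)) * ∏ i, Real.exp ((r * θ i) * s i) := by
      intro s
      rw [Finset.prod_mul_distrib, ← Real.exp_sum, ← Real.exp_sum]
      congr 2
      calc ∑ c, r * v s c * g c = ∑ c, ∑ i, r * (a i c * s i) * g c := by
            refine Finset.sum_congr rfl fun c _ => ?_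
            rw [hv]
            simp only [Finset.sum_mul, Finset.mul_sum]
        _ = ∑ i, ∑ c, r * (a i c * s i) * g c := Finset.sum_comm
        _ = ∑ i, (r * θ i) * s i := by
            refine Finset.sum_congr rfl fun i _ => ?_
            rw [hθ]
            simp only [Finset.mul_sum, Finset.sum_mul]
            refine Finset.sum_congr rfl fun c _ => ?_
            ring
    have hsum : ∑ s ∈ S, ∏ i, Real.exp ((r * θ i) * s i)
        = ∏ i, (Real.exp (-(r * θ i)) + Real.exp (r * θ i)) := by
      have h := Finset.prod_univ_sum (fun _ : Fin n => ({-1, 1} : Finset ℝ))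
        (fun i y => Real.exp ((r * θ i) * y))
      refine (h.symm.trans ?_)
      refine Finset.prod_congr rfl fun i _ => ?_
      rw [Finset.sum_insert (by norm_num), Finset.sum_singleton]
      rw [mul_neg_one, mul_one]
    have hbd : ∏ i, (Real.exp (-(r * θ i)) + Real.exp (r * θ i))
        ≤ 2 ^ n * Real.exp (l * ∑ c, q c * g c ^ 2) := by
      calc ∏ i, (Real.exp (-(r * θ i)) + Real.exp (r * θ i))
          ≤ ∏ i, (2 * Real.exp ((r * θ i) ^ 2 / 2)) := by
            refine Finset.prod_le_prod (fun i _ => by positivity)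
              (fun i _ => two_exp_bound (r * θ i))
        _ = 2 ^ n * Real.exp (∑ i, (r * θ i) ^ 2 / 2) := by
            rw [Finset.prod_mul_distrib, Finset.prod_const, Real.exp_sum, Finset.card_univ,
              Fintype.card_fin]
        _ = 2 ^ n * Real.exp (l * ∑ c, q c * g c ^ 2) := by
            congr 2
            have : ∀ i, (r * θ i) ^ 2 / 2 = l * (θ i * θ i) := by
              intro i
              rw [mul_pow, hr2, sq]
              ring
            rw [Finset.sum_congr rfl fun i _ => this i, ← Finset.mul_sum]
            congr 1
            calc ∑ i, θ i * θ i
                = ∑ i, ∑ c, ∑ c', (a i c * a i c') * (g c * g c') := by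
                  refine Finset.sum_congr rfl fun i _ => ?_
                  rw [hθ, Finset.sum_mul_sum]
                  exact Finset.sum_congr rfl fun c _ => Finset.sum_congr rfl fun c' _ => by ring
              _ = ∑ c, ∑ c', ∑ i, (a i c * a i c') * (g c * g c') := by
                  rw [Finset.sum_comm]
                  exact Finset.sum_congr rfl fun c _ => Finset.sum_comm
              _ = ∑ c, ∑ c', (if c = c' then q c else 0) * (g c * g c') := by
                  refine Finset.sum_congr rfl fun c _ => Finset.sum_congr rfl fun c' _ => ?_
                  rw [← Finset.sum_mul, hGram]
              _ = ∑ c, q c * g c ^ 2 := by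
                  refine Finset.sum_congr rfl fun c _ => ?_
                  simp only [ite_mul, zero_mul]
                  rw [Finset.sum_ite_eq]
                  simp [sq]
    calc ∑ s ∈ S, ∏ c, (phi (g c) * Real.exp (r * v s c * g c))
        = (∏ c, phi (g c)) * ∑ s ∈ S, ∏ i, Real.exp ((r * θ i) * s i) := by
          rw [Finset.mul_sum]
          exact Finset.sum_congr rfl fun s _ => hps s
      _ ≤ (∏ c, phi (g c)) * (2 ^ n * Real.exp (l * ∑ c, q c * g c ^ 2)) := by
          refine mul_le_mul_of_nonneg_left ?_ (Finset.prod_nonneg fun c _ => phi_nonneg _)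
          rw [hsum]
          exact hbd
      _ = 2 ^ n * ∏ c, (phi (g c) * Real.exp (l * q c * g c ^ 2)) := by
          rw [Finset.prod_mul_distrib]
          have h1 : Real.exp (l * ∑ c, q c * g c ^ 2) = ∏ c, Real.exp (l * q c * g c ^ 2) := by
            rw [Finset.mul_sum, Real.exp_sum]
            exact Finset.prod_congr rfl fun c _ => congrArg Real.exp (by ring)
          rw [h1]
          ring
  -- assemble
  have hlq : ∀ c : Fin d, l * q c < 2⁻¹ := by
    intro c
    have : l * q c ≤ l := by nlinarith [hq0 c, hq1 c]
    linarith
  have hintb : Integrable (fun g : Fin d → ℝ =>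
      ∏ c, (phi (g c) * Real.exp (l * q c * g c ^ 2))) := by
    exact Integrable.fintype_prod (f := fun c y => phi y * Real.exp (l * q c * y ^ 2))
      (fun c => integrable_phi_exp_sq (hlq c))
  calc ∑ s ∈ S, Real.exp (l * ∑ c, v s c ^ 2)
      = ∑ s ∈ S, ∫ g : Fin d → ℝ, ∏ c, (phi (g c) * Real.exp (r * v s c * g c)) :=
        Finset.sum_congr rfl fun s _ => step1 s
    _ = ∫ g : Fin d → ℝ, ∑ s ∈ S, ∏ c, (phi (g c) * Real.exp (r * v s c * g c)) :=
        (integral_finset_sum S fun s _ => hint s).symm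
    _ ≤ ∫ g : Fin d → ℝ, 2 ^ n * ∏ c, (phi (g c) * Real.exp (l * q c * g c ^ 2)) := by
        refine integral_mono_of_nonneg (Filter.Eventually.of_forall fun g => ?_)
          (hintb.const_mul _) (Filter.Eventually.of_forall fun g => step3 g)
        exact Finset.sum_nonneg fun s _ => Finset.prod_nonneg fun c _ =>
          mul_nonneg (phi_nonneg _) (Real.exp_nonneg _)
    _ = 2 ^ n * ∏ c, ∫ x : ℝ, phi x * Real.exp (l * q c * x ^ 2) := by
        rw [integral_const_mul, integral_fintype_prod_volume_eq_prod
          (f := fun c y => phi y * Real.exp (l * q c * y ^ 2))]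
    _ ≤ 2 ^ n * ∏ c, Real.exp (l * q c / (1 - 2 * l)) := by
        refine mul_le_mul_of_nonneg_left ?_ (by positivity)
        refine Finset.prod_le_prod (fun c _ => ?_) (fun c _ => ?_)
        · rw [integral_phi_exp_sq (hlq c)]
          positivity
        · rw [integral_phi_exp_sq (hlq c)]
          exact inv_sqrt_le (hq0 c) (hq1 c) hl0 hl
    _ = 2 ^ n * Real.exp (l * (∑ c, q c) / (1 - 2 * l)) := by
        rw [← Real.exp_sum, ← Finset.sum_div, ← Finset.mul_sum]


lemma chernoff_count {n d : ℕ} (a : Fin n → Fin d → ℝ) (q : Fin d → ℝ)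
    (hGram : ∀ c c', ∑ i, a i c * a i c' = if c = c' then q c else 0)
    (hq0 : ∀ c, 0 ≤ q c) (hq1 : ∀ c, q c ≤ 1)
    (de L : ℝ) (hde : de = ∑ c, q c) (hL : 0 < L) :
    (((Fintype.piFinset (fun _ : Fin n => ({-1, 1} : Finset ℝ))).filter
        (fun s => Real.sqrt de + Real.sqrt (8 * L)
          ≤ Real.sqrt (∑ c, (∑ i, a i c * s i) ^ 2))).card : ℝ)
      ≤ (2 : ℝ) ^ n * Real.exp (-L) := by
  classical
  set S := Fintype.piFinset (fun _ : Fin n => ({-1, 1} : Finset ℝ)) with hS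
  have hde0 : 0 ≤ de := hde ▸ Finset.sum_nonneg fun c _ => hq0 c
  set t : ℝ := Real.sqrt (8 * L) with htdef
  have ht : 0 < t := Real.sqrt_pos.2 (by linarith)
  have ht2 : t ^ 2 = 8 * L := Real.sq_sqrt (by linarith)
  rcases eq_or_lt_of_le hde0 with hde' | hde'
  · -- de = 0 : all coefficients vanish, filter is empty
    have hq : ∀ c, q c = 0 := by
      intro c
      have h := (Finset.sum_eq_zero_iff_of_nonneg (fun c _ => hq0 c)).1 (hde ▸ hde'.symm)
      exact h c (Finset.mem_univ c)
    have ha : ∀ i c, a i c = 0 := by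
      intro i c
      have h := hGram c c
      rw [if_pos rfl, hq c] at h
      have h2 := (Finset.sum_eq_zero_iff_of_nonneg (fun i _ => mul_self_nonneg (a i c))).1 h
      exact mul_self_eq_zero.1 (h2 i (Finset.mem_univ i))
    have hempty : (S.filter (fun s => Real.sqrt de + t
        ≤ Real.sqrt (∑ c, (∑ i, a i c * s i) ^ 2))) = ∅ := by
      refine Finset.filter_eq_empty_iff.2 fun s _ => ?_
      have : (∑ c, (∑ i, a i c * s i) ^ 2) = 0 := by
        refine Finset.sum_eq_zero fun c _ => ?_
        rw [Finset.sum_eq_zero fun i _ => by rw [ha i c, zero_mul]]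
        norm_num
      rw [this, Real.sqrt_zero, ← hde', Real.sqrt_zero, zero_add]
      push_neg
      linarith
    rw [hempty]
    simp only [Finset.card_empty, Nat.cast_zero]
    positivity
  · -- de > 0 : Chernoff
    set F : ℝ := Real.sqrt de with hFdef
    have hF : 0 < F := Real.sqrt_pos.2 hde'
    have hF2 : F ^ 2 = de := Real.sq_sqrt hde0
    have hFt : 0 < F + t := by linarith
    set l : ℝ := t / (2 * (F + t)) with hldef
    have hl0 : 0 ≤ l := by positivity
    have hl : 2 * l < 1 := by
      have h2l : 2 * l = t / (F + t) := by
        rw [hldef, eq_div_iff hFt.ne']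
        field_simp
        try ring
      rw [h2l, div_lt_one hFt]
      linarith
    have key := mgf_bound a q hGram hq0 hq1 l hl0 hl
    have hτQ : ∀ s ∈ S.filter (fun s => F + t
        ≤ Real.sqrt (∑ c, (∑ i, a i c * s i) ^ 2)), (F + t) ^ 2 ≤ ∑ c, (∑ i, a i c * s i) ^ 2 := by
      intro s hs
      have h := (Finset.mem_filter.1 hs).2
      have hQ0 : 0 ≤ ∑ c, (∑ i, a i c * s i) ^ 2 := Finset.sum_nonneg fun c _ => sq_nonneg _
      exact (Real.le_sqrt hFt.le hQ0).1 h
    calc ((S.filter (fun s => F + t ≤ Real.sqrt (∑ c, (∑ i, a i c * s i) ^ 2))).card : ℝ)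
        = ∑ _s ∈ S.filter (fun s => F + t ≤ Real.sqrt (∑ c, (∑ i, a i c * s i) ^ 2)), (1:ℝ) := by
          rw [Finset.sum_const, nsmul_eq_mul, mul_one]
      _ ≤ ∑ s ∈ S.filter (fun s => F + t ≤ Real.sqrt (∑ c, (∑ i, a i c * s i) ^ 2)),
            Real.exp (l * ∑ c, (∑ i, a i c * s i) ^ 2) * Real.exp (-(l * (F + t) ^ 2)) := by
          refine Finset.sum_le_sum fun s hs => ?_
          rw [← Real.exp_add]
          refine Real.one_le_exp ?_
          have := hτQ s hs
          nlinarith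
      _ ≤ ∑ s ∈ S, Real.exp (l * ∑ c, (∑ i, a i c * s i) ^ 2) * Real.exp (-(l * (F + t) ^ 2)) :=
          Finset.sum_le_sum_of_subset_of_nonneg (Finset.filter_subset _ _)
            (fun s _ _ => by positivity)
      _ = (∑ s ∈ S, Real.exp (l * ∑ c, (∑ i, a i c * s i) ^ 2)) * Real.exp (-(l * (F + t) ^ 2)) :=
          (Finset.sum_mul _ _ _).symm
      _ ≤ (2 ^ n * Real.exp (l * de / (1 - 2 * l))) * Real.exp (-(l * (F + t) ^ 2)) := by
          refine mul_le_mul_of_nonneg_right ?_ (Real.exp_nonneg _)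
          rw [hde]
          exact key
      _ = 2 ^ n * Real.exp (l * de / (1 - 2 * l) - l * (F + t) ^ 2) := by
          rw [mul_assoc, ← Real.exp_add]
          ring_nf
      _ ≤ 2 ^ n * Real.exp (-L) := by
          refine mul_le_mul_of_nonneg_left (Real.exp_le_exp.2 ?_) (by positivity)
          have h1 : 1 - 2 * l = F / (F + t) := by
            rw [hldef]
            field_simp
            ring
          have hexp : l * de / (1 - 2 * l) - l * (F + t) ^ 2 = -(t ^ 2 / 2) := by
            rw [h1, hldef, ← hF2]
            field_simp
            ring
          rw [hexp, ht2]
          linarith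


end Stmt12Aux

open Stmt12Aux

/-- Row norms of `H_n diag(ε) U D̄` for Rademacher `ε`:
`P(max_j ‖e_jᵀ H_n diag(ε) U D̄‖₂ ≥ √(d_e/n) + √(8 log(n/δ)/n)) ≤ δ`. -/
theorem stmt12 {Ω : Type*} [MeasurableSpace Ω] (P : Measure Ω) [IsProbabilityMeasure P]
    {k d : ℕ}
    (U : Matrix (Fin (2 ^ k)) (Fin d) ℝ) (hU : Uᵀ * U = 1)
    (Dbar : Matrix (Fin d) (Fin d) ℝ) (hDdiag : Dbar.IsDiag) (hDnn : ∀ i, 0 ≤ Dbar i i)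
    (hDle : ∀ i, Dbar i i ≤ 1)
    -- Rademacher vector `ε` with i.i.d. uniform `±1` entries
    (εr : Ω → Fin (2 ^ k) → ℝ)
    (hεindep : iIndepFun (fun i ω => εr ω i) P)
    (hεdist : ∀ i, Measure.map (fun ω => εr ω i) P =
      (2 : ℝ≥0∞)⁻¹ • (Measure.dirac (-1 : ℝ) + Measure.dirac (1 : ℝ)))
    (δ : ℝ) (hδ : δ ∈ Set.Ioo (0 : ℝ) 1) :
    P {ω | ∃ j : Fin (2 ^ k),
        Real.sqrt ((∑ i, ∑ j', (Dbar i j') ^ 2) / (2 ^ k : ℝ)) +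
          Real.sqrt (8 * Real.log ((2 ^ k : ℝ) / δ) / (2 ^ k : ℝ)) ≤
        Real.sqrt (∑ c,
          ((walsh k * Matrix.diagonal (εr ω) * U * Dbar) j c) ^ 2)} ≤
      ENNReal.ofReal δ := by
  classical
  obtain ⟨hδ0, hδ1⟩ := hδ
  have hnR : (0:ℝ) < (2:ℝ) ^ k := by positivity
  have hnR1 : (1:ℝ) ≤ (2:ℝ) ^ k := one_le_pow₀ (by norm_num)
  have hLpos : 0 < Real.log ((2 ^ k : ℝ) / δ) := by
    refine Real.log_pos ?_
    rw [lt_div_iff₀ hδ0]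
    nlinarith
  -- abbreviations
  set de : ℝ := ∑ i, ∑ j', (Dbar i j') ^ 2 with hde_def
  set L : ℝ := Real.log ((2 ^ k : ℝ) / δ) with hL_def
  set τ : ℝ := Real.sqrt (de / (2 ^ k : ℝ)) + Real.sqrt (8 * L / (2 ^ k : ℝ)) with hτ_def
  set S : Finset (Fin (2 ^ k) → ℝ) :=
    Fintype.piFinset (fun _ : Fin (2 ^ k) => ({-1, 1} : Finset ℝ)) with hS_def
  -- coefficients
  set A : Fin (2 ^ k) → Fin (2 ^ k) → Fin d → ℝ := fun j i c =>
    ((-1 : ℝ) ^ (∑ l ∈ Finset.range k, (Nat.testBit j.val l && Nat.testBit i.val l).toNat))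
      * (U * Dbar) i c with hA_def
  have hwalsh : ∀ j i : Fin (2 ^ k), walsh k j i = (Real.sqrt ((2:ℝ) ^ k))⁻¹ *
      ((-1 : ℝ) ^ (∑ l ∈ Finset.range k, (Nat.testBit j.val l && Nat.testBit i.val l).toNat)) :=
    fun j i => rfl
  have hentry : ∀ (x : Fin (2 ^ k) → ℝ) (j : Fin (2 ^ k)) (c : Fin d),
      (walsh k * Matrix.diagonal x * U * Dbar) j c
        = (Real.sqrt ((2:ℝ) ^ k))⁻¹ * ∑ i, A j i c * x i := by
    intro x j c
    rw [Matrix.mul_assoc (walsh k * Matrix.diagonal x), Matrix.mul_apply, Finset.mul_sum]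
    refine Finset.sum_congr rfl fun i _ => ?_
    rw [Matrix.mul_diagonal, hwalsh j i, hA_def]
    ring
  -- Gram structure
  have hDbarT : Dbarᵀ = Dbar := by
    ext a b
    rw [Matrix.transpose_apply]
    rcases eq_or_ne a b with h | h
    · rw [h]
    · rw [hDdiag h, hDdiag (Ne.symm h)]
  have hUD : (U * Dbar)ᵀ * (U * Dbar) = Dbar * Dbar := by
    rw [Matrix.transpose_mul, hDbarT, Matrix.mul_assoc, ← Matrix.mul_assoc Uᵀ U Dbar, hU,
      Matrix.one_mul]
  have hGram : ∀ (j : Fin (2 ^ k)) (c c' : Fin d),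
      ∑ i, A j i c * A j i c' = if c = c' then (Dbar c c) ^ 2 else 0 := by
    intro j c c'
    have h1 : ∑ i, A j i c * A j i c' = ∑ i, (U * Dbar) i c * (U * Dbar) i c' := by
      refine Finset.sum_congr rfl fun i _ => ?_
      rw [hA_def]
      simp only
      rw [show ((-1:ℝ) ^ (∑ l ∈ Finset.range k,
          (Nat.testBit j.val l && Nat.testBit i.val l).toNat) * (U * Dbar) i c)
          * ((-1:ℝ) ^ (∑ l ∈ Finset.range k,
          (Nat.testBit j.val l && Nat.testBit i.val l).toNat) * (U * Dbar) i c')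
        = ((-1:ℝ) ^ (∑ l ∈ Finset.range k, (Nat.testBit j.val l && Nat.testBit i.val l).toNat))^2
          * ((U * Dbar) i c * (U * Dbar) i c') from by ring]
      rw [← pow_mul, mul_comm _ 2, pow_mul, neg_one_sq, one_pow, one_mul]
    rw [h1]
    have h2 : ∑ i, (U * Dbar) i c * (U * Dbar) i c' = ((U * Dbar)ᵀ * (U * Dbar)) c c' := by
      rw [Matrix.mul_apply]
      exact Finset.sum_congr rfl fun i _ => by rw [Matrix.transpose_apply]
    rw [h2, hUD, Matrix.mul_apply]
    rw [Finset.sum_eq_single c (fun e _ he => by rw [hDdiag (Ne.symm he), zero_mul])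
      (fun h => absurd (Finset.mem_univ c) h)]
    rcases eq_or_ne c c' with h | h
    · rw [if_pos h, ← h, sq]
    · rw [if_neg h, hDdiag h, mul_zero]
  have hq0 : ∀ c : Fin d, 0 ≤ (Dbar c c) ^ 2 := fun c => sq_nonneg _
  have hq1 : ∀ c : Fin d, (Dbar c c) ^ 2 ≤ 1 := fun c =>
    pow_le_one₀ (hDnn c) (hDle c)
  have hdeq : de = ∑ c, (Dbar c c) ^ 2 := by
    rw [hde_def]
    refine Finset.sum_congr rfl fun i _ => ?_
    rw [Finset.sum_eq_single i (fun j' _ hj' => by rw [hDdiag (Ne.symm hj')]; norm_num)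
      (fun h => absurd (Finset.mem_univ i) h)]
  have hde0 : 0 ≤ de := hdeq ▸ Finset.sum_nonneg fun c _ => hq0 c
  -- sum of squares of a row
  have hsumsq : ∀ (x : Fin (2 ^ k) → ℝ) (j : Fin (2 ^ k)),
      ∑ c, ((walsh k * Matrix.diagonal x * U * Dbar) j c) ^ 2
        = (∑ c, (∑ i, A j i c * x i) ^ 2) / (2 ^ k : ℝ) := by
    intro x j
    rw [Finset.sum_congr rfl fun c _ => by rw [hentry x j c]]
    rw [Finset.sum_congr rfl fun (c : Fin d) (_ : c ∈ Finset.univ) =>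
      (mul_pow (Real.sqrt ((2:ℝ)^k))⁻¹ (∑ i, A j i c * x i) 2)]
    rw [← Finset.mul_sum, ← Real.sqrt_inv, Real.sq_sqrt (inv_nonneg.2 hnR.le),
      inv_mul_eq_div]
  -- predicate equivalence
  have hpred : ∀ (j : Fin (2 ^ k)) (x : Fin (2 ^ k) → ℝ),
      (τ ≤ Real.sqrt (∑ c, ((walsh k * Matrix.diagonal x * U * Dbar) j c) ^ 2))
        ↔ (Real.sqrt de + Real.sqrt (8 * L) ≤ Real.sqrt (∑ c, (∑ i, A j i c * x i) ^ 2)) := by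
    intro j x
    rw [hsumsq x j]
    rw [Real.sqrt_div (Finset.sum_nonneg fun c _ => sq_nonneg _) ((2:ℝ)^k)]
    rw [hτ_def, Real.sqrt_div hde0 ((2:ℝ)^k), Real.sqrt_div (by positivity) ((2:ℝ)^k),
      ← add_div]
    rw [div_le_div_iff_of_pos_right (Real.sqrt_pos.2 hnR)]
  -- the event as a preimage
  set T : Set (Fin (2 ^ k) → ℝ) := {x | ∃ j : Fin (2 ^ k),
      τ ≤ Real.sqrt (∑ c, ((walsh k * Matrix.diagonal x * U * Dbar) j c) ^ 2)} with hT_def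
  have hEv : {ω | ∃ j : Fin (2 ^ k),
      τ ≤ Real.sqrt (∑ c, ((walsh k * Matrix.diagonal (εr ω) * U * Dbar) j c) ^ 2)}
        = εr ⁻¹' T := rfl
  rw [hEv]
  -- measurability
  have hGm : ∀ j : Fin (2 ^ k), Measurable fun x : Fin (2 ^ k) → ℝ =>
      ∑ c, ((walsh k * Matrix.diagonal x * U * Dbar) j c) ^ 2 := by
    intro j
    have heq : (fun x : Fin (2 ^ k) → ℝ =>
        ∑ c, ((walsh k * Matrix.diagonal x * U * Dbar) j c) ^ 2)
        = fun x => (∑ c, (∑ i, A j i c * x i) ^ 2) / (2 ^ k : ℝ) :=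
      funext fun x => hsumsq x j
    rw [heq]
    exact (Finset.measurable_sum _ fun c _ =>
      ((Finset.measurable_sum _ fun i _ =>
        measurable_const.mul (measurable_pi_apply i)).pow_const 2)).div_const _
  have hTmeas : MeasurableSet T := by
    rw [hT_def, Set.setOf_exists]
    exact MeasurableSet.iUnion fun j =>
      measurableSet_le measurable_const ((hGm j).sqrt)
  -- a.e. measurability
  have hAEm : ∀ i, AEMeasurable (fun ω => εr ω i) P := by
    intro i
    by_contra h
    have hd := hεdist i
    rw [Measure.map_of_not_aemeasurable h] at hd
    have := congrArg (fun μ : Measure ℝ => μ Set.univ) hd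
    simp [Measure.smul_apply, Measure.add_apply] at this
    rw [ENNReal.inv_two_add_inv_two] at this
    exact zero_ne_one this
  have hAEj : AEMeasurable εr P := by
    refine ⟨fun ω i => (hAEm i).mk _ ω, measurable_pi_lambda _ fun i => (hAEm i).measurable_mk, ?_⟩
    have hae : ∀ᵐ ω ∂P, ∀ i, εr ω i = (hAEm i).mk _ ω := ae_all_iff.2 fun i => (hAEm i).ae_eq_mk
    filter_upwards [hae] with ω hω
    funext i
    exact hω i
  -- coordinate distribution
  have hnu : ∀ (i : Fin (2 ^ k)) (B : Set ℝ), MeasurableSet B →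
      P ((fun ω => εr ω i) ⁻¹' B)
        = 2⁻¹ * (Measure.dirac (-1 : ℝ) B + Measure.dirac (1 : ℝ) B) := by
    intro i B hB
    rw [← Measure.map_apply_of_aemeasurable (hAEm i) hB, hεdist i, Measure.smul_apply,
      Measure.add_apply, smul_eq_mul]
  -- singleton masses
  have hsing : ∀ s ∈ S, (P.map εr) {s} = ((2 : ℝ≥0∞) ^ (2 ^ k))⁻¹ := by
    intro s hs
    rw [Measure.map_apply_of_aemeasurable hAEj (measurableSet_singleton s)]
    have hpre : εr ⁻¹' {s} = ⋂ i, (fun ω => εr ω i) ⁻¹' {s i} := by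
      ext ω
      simp [funext_iff]
    rw [hpre, hεindep.meas_iInter (fun i => ⟨{s i}, measurableSet_singleton _, rfl⟩)]
    have hhalf : ∀ i, P ((fun ω => εr ω i) ⁻¹' {s i}) = 2⁻¹ := by
      intro i
      rw [hnu i _ (measurableSet_singleton _)]
      have hsi := (Fintype.mem_piFinset.1 (hS_def ▸ hs)) i
      rcases Finset.mem_insert.1 hsi with h | h
      · rw [h]
        rw [Measure.dirac_apply' _ (measurableSet_singleton _),
          Measure.dirac_apply' _ (measurableSet_singleton _)]
        norm_num
      · rw [Finset.mem_singleton.1 h]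
        rw [Measure.dirac_apply' _ (measurableSet_singleton _),
          Measure.dirac_apply' _ (measurableSet_singleton _)]
        norm_num
    rw [Finset.prod_congr rfl fun i _ => hhalf i, Finset.prod_const, Finset.card_univ,
      Fintype.card_fin, ← ENNReal.inv_pow]
  -- mass outside S vanishes
  have hScomp : (P.map εr) ((S : Set (Fin (2 ^ k) → ℝ))ᶜ) = 0 := by
    have hBm : MeasurableSet (({-1, 1} : Set ℝ)ᶜ) :=
      ((measurableSet_singleton (1 : ℝ)).insert (-1)).compl
    have hsub : ((S : Set (Fin (2 ^ k) → ℝ)))ᶜ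
        ⊆ ⋃ i, (fun x : Fin (2 ^ k) → ℝ => x i) ⁻¹' (({-1, 1} : Set ℝ)ᶜ) := by
      intro x hx
      simp only [Set.mem_compl_iff, Finset.mem_coe, hS_def, Fintype.mem_piFinset] at hx
      push_neg at hx
      obtain ⟨i, hi⟩ := hx
      refine Set.mem_iUnion.2 ⟨i, ?_⟩
      simp only [Set.mem_preimage, Set.mem_compl_iff, Set.mem_insert_iff, Set.mem_singleton_iff]
      simpa using hi
    have hzero : ∀ i : Fin (2 ^ k),
        (P.map εr) ((fun x : Fin (2 ^ k) → ℝ => x i) ⁻¹' (({-1, 1} : Set ℝ)ᶜ)) = 0 := by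
      intro i
      rw [Measure.map_apply_of_aemeasurable hAEj (hBm.preimage (measurable_pi_apply i))]
      have hcomp : εr ⁻¹' ((fun x : Fin (2 ^ k) → ℝ => x i) ⁻¹' (({-1, 1} : Set ℝ)ᶜ))
          = (fun ω => εr ω i) ⁻¹' (({-1, 1} : Set ℝ)ᶜ) := rfl
      rw [hcomp, hnu i _ hBm]
      rw [Measure.dirac_apply' _ hBm, Measure.dirac_apply' _ hBm]
      have h1 : (-1 : ℝ) ∈ ({-1, 1} : Set ℝ) := Set.mem_insert _ _
      have h2 : (1 : ℝ) ∈ ({-1, 1} : Set ℝ) := Set.mem_insert_of_mem _ rfl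
      rw [Set.indicator_of_notMem (by simpa using h1), Set.indicator_of_notMem (by simpa using h2)]
      simp
    refine le_antisymm ?_ zero_le
    refine le_trans (measure_mono hsub) ?_
    refine le_trans (measure_iUnion_le _) ?_
    rw [tsum_congr hzero]
    simp
  -- counting
  have hcount : P (εr ⁻¹' T)
      ≤ ∑ j : Fin (2 ^ k), (((S.filter (fun s => τ ≤ Real.sqrt (∑ c,
          ((walsh k * Matrix.diagonal s * U * Dbar) j c) ^ 2))).card : ℝ≥0∞)
            * ((2 : ℝ≥0∞) ^ (2 ^ k))⁻¹) := by
    rw [← Measure.map_apply_of_aemeasurable hAEj hTmeas]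
    have hTsub : T ⊆ (T ∩ (S : Set (Fin (2 ^ k) → ℝ))) ∪ ((S : Set (Fin (2 ^ k) → ℝ)))ᶜ := by
      intro x hx
      by_cases h : x ∈ (S : Set (Fin (2 ^ k) → ℝ))
      · exact Or.inl ⟨hx, h⟩
      · exact Or.inr h
    refine le_trans (measure_mono hTsub) ?_
    refine le_trans (measure_union_le _ _) ?_
    rw [hScomp, add_zero]
    have hbi : T ∩ (S : Set (Fin (2 ^ k) → ℝ))
        ⊆ ⋃ s ∈ S.filter (· ∈ T), ({s} : Set (Fin (2 ^ k) → ℝ)) := by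
      intro x hx
      refine Set.mem_biUnion (Finset.mem_filter.2 ⟨hx.2, hx.1⟩) rfl
    refine le_trans (measure_mono hbi) ?_
    refine le_trans (measure_biUnion_finset_le _ _) ?_
    rw [Finset.sum_congr rfl fun s hs => hsing s (Finset.mem_filter.1 hs).1]
    rw [Finset.sum_const, nsmul_eq_mul]
    -- card filter ≤ ∑ j card filter j
    have hcard : (S.filter (· ∈ T)).card
        ≤ ∑ j : Fin (2 ^ k), (S.filter (fun s => τ ≤ Real.sqrt (∑ c,
          ((walsh k * Matrix.diagonal s * U * Dbar) j c) ^ 2))).card := by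
      refine le_trans (Finset.card_le_card ?_) (Finset.card_biUnion_le)
      intro s hs
      obtain ⟨hsS, hsT⟩ := Finset.mem_filter.1 hs
      obtain ⟨j, hj⟩ := hsT
      exact Finset.mem_biUnion.2 ⟨j, Finset.mem_univ j, Finset.mem_filter.2 ⟨hsS, hj⟩⟩
    calc ((S.filter (· ∈ T)).card : ℝ≥0∞) * ((2 : ℝ≥0∞) ^ (2 ^ k))⁻¹
        ≤ ((∑ j : Fin (2 ^ k), (S.filter (fun s => τ ≤ Real.sqrt (∑ c,
            ((walsh k * Matrix.diagonal s * U * Dbar) j c) ^ 2))).card : ℕ) : ℝ≥0∞)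
            * ((2 : ℝ≥0∞) ^ (2 ^ k))⁻¹ := by
          refine mul_le_mul_left ?_ _
          exact_mod_cast Nat.cast_le.2 hcard
      _ = _ := by
          rw [Nat.cast_sum, Finset.sum_mul]
  refine le_trans hcount ?_
  -- per-row bound
  have hKj : ∀ j : Fin (2 ^ k), ((S.filter (fun s => τ ≤ Real.sqrt (∑ c,
      ((walsh k * Matrix.diagonal s * U * Dbar) j c) ^ 2))).card : ℝ)
        ≤ (2:ℝ) ^ (2 ^ k) * (δ / (2 ^ k : ℝ)) := by
    intro j
    have hfil : S.filter (fun s => τ ≤ Real.sqrt (∑ c,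
        ((walsh k * Matrix.diagonal s * U * Dbar) j c) ^ 2))
        = S.filter (fun s => Real.sqrt de + Real.sqrt (8 * L)
            ≤ Real.sqrt (∑ c, (∑ i, A j i c * s i) ^ 2)) :=
      Finset.filter_congr fun s _ => by rw [hpred j s]
    rw [hfil]
    have hcc := chernoff_count (fun i c => A j i c) (fun c => (Dbar c c) ^ 2)
      (hGram j) hq0 hq1 de L hdeq hLpos
    refine le_trans hcc ?_
    have hexpL : Real.exp (-L) = δ / (2 ^ k : ℝ) := by
      rw [hL_def, Real.exp_neg, Real.exp_log (div_pos hnR hδ0), inv_div]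
    rw [hexpL]
  -- transfer to ENNReal and sum
  have hper : ∀ j : Fin (2 ^ k), (((S.filter (fun s => τ ≤ Real.sqrt (∑ c,
      ((walsh k * Matrix.diagonal s * U * Dbar) j c) ^ 2))).card : ℝ≥0∞)
        * ((2 : ℝ≥0∞) ^ (2 ^ k))⁻¹) ≤ ENNReal.ofReal (δ / (2 ^ k : ℝ)) := by
    intro j
    set N := (S.filter (fun s => τ ≤ Real.sqrt (∑ c,
      ((walsh k * Matrix.diagonal s * U * Dbar) j c) ^ 2))).card with hN_def
    have h2 : ((2 : ℝ≥0∞) ^ (2 ^ k))⁻¹ = ENNReal.ofReal (((2:ℝ) ^ (2 ^ k))⁻¹) := by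
      rw [ENNReal.ofReal_inv_of_pos (by positivity), ENNReal.ofReal_pow (by norm_num)]
      norm_num
    rw [h2, ← ENNReal.ofReal_natCast, ← ENNReal.ofReal_mul (by positivity)]
    refine ENNReal.ofReal_le_ofReal ?_
    have h3 : (0:ℝ) < (2:ℝ) ^ (2 ^ k) := by positivity
    calc (N : ℝ) * ((2:ℝ) ^ (2 ^ k))⁻¹
        ≤ ((2:ℝ) ^ (2 ^ k) * (δ / (2 ^ k : ℝ))) * ((2:ℝ) ^ (2 ^ k))⁻¹ :=
          mul_le_mul_of_nonneg_right (hKj j) (by positivity)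
      _ = δ / (2 ^ k : ℝ) := by
          field_simp
          try ring
  refine le_trans (Finset.sum_le_sum fun j _ => hper j) ?_
  rw [Finset.sum_const, Finset.card_univ, Fintype.card_fin, nsmul_eq_mul]
  rw [← ENNReal.ofReal_natCast, ← ENNReal.ofReal_mul (by positivity)]
  refine le_of_eq (congrArg ENNReal.ofReal ?_)
  have hc : ((2 ^ k : ℕ) : ℝ) = (2:ℝ) ^ k := by push_cast; ring
  rw [hc, mul_div_cancel₀ _ hnR.ne']

end
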